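/- The minimum degree of the Fibonacci cube Γ_n is ⌊(n+2)/3⌋ for n ≥ 1. -/

import Mathlib

open SimpleGraph

/-- The `n`-dimensional hypercube: vertices are binary strings of length `n`,
adjacent iff they differ in exactly one bit (Hamming distance 1). -/
def Qcube (n : ℕ) : SimpleGraph (Fin n → Bool) where
  Adj x y := hammingDist x y = 1
  symm := ⟨fun x y h => by show hammingDist y x = 1; rwa [hammingDist_comm]⟩
  loopless := ⟨fun x h => by simp [hammingDist_self] at h⟩

/-- A binary string has no two consecutive ones. -/
def NoConsecOnes {n : ℕ} (x : Fin n → Bool) : Prop :=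
  ∀ i j : Fin n, (j : ℕ) = (i : ℕ) + 1 → ¬(x i = true ∧ x j = true)

/-- The vertex set of the Fibonacci cube: binary strings with no two
consecutive ones. -/
def fibSet (n : ℕ) : Set (Fin n → Bool) := {x | NoConsecOnes x}

/-- The Fibonacci cube `Γ_n`, the subgraph of `Q_n` induced by strings with no
two consecutive ones. -/
def FibCube (n : ℕ) : SimpleGraph ↥(fibSet n) := (Qcube n).induce (fibSet n)

section Aux

open Finset

variable {n : ℕ}

instance NoConsecOnes.dec : DecidablePred (@NoConsecOnes n) := fun x => by
  unfold NoConsecOnes; infer_instance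

/-- Flip bit `i`. -/
def flp (x : Fin n → Bool) (i : Fin n) : Fin n → Bool := Function.update x i (!x i)

lemma flp_apply (x : Fin n → Bool) (i j : Fin n) :
    flp x i j = if j = i then !x i else x j := by
  simp [flp, Function.update]

lemma ham_flp (x : Fin n → Bool) (i : Fin n) : hammingDist x (flp x i) = 1 := by
  have h : (Finset.univ.filter fun j => x j ≠ flp x i j) = {i} := by
    ext j
    by_cases hj : j = i <;> simp [flp_apply, hj]
  rw [hammingDist, h, Finset.card_singleton]

lemma eq_flp_of_ham {x y : Fin n → Bool} (h : hammingDist x y = 1) : ∃ i, y = flp x i := by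
  rw [hammingDist] at h
  obtain ⟨i, hi⟩ := Finset.card_eq_one.mp h
  have hmem : ∀ j : Fin n, x j ≠ y j ↔ j = i := by
    intro j
    constructor
    · intro hne
      have : j ∈ ({i} : Finset (Fin n)) := hi ▸ (by simp [hne])
      simpa using this
    · intro hji
      subst hji
      have : j ∈ (Finset.univ.filter fun k => x k ≠ y k) := hi ▸ Finset.mem_singleton_self j
      simpa using this
  refine ⟨i, funext fun j => ?_⟩
  rw [flp_apply]
  by_cases hj : j = i
  · subst hj
    rw [if_pos rfl]
    have hne : x j ≠ y j := (hmem j).mpr rfl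
    cases hx : x j <;> cases hy : y j <;> simp_all
  · rw [if_neg hj]
    have hxy : x j = y j := by
      by_contra hne
      exact hj ((hmem j).mp hne)
    exact hxy.symm

lemma noc_flp_true {x : Fin n → Bool} (hx : NoConsecOnes x) {i : Fin n} (hi : x i = true) :
    NoConsecOnes (flp x i) := by
  intro a b hab hab2
  obtain ⟨ha, hb⟩ := hab2
  have mono : ∀ j, flp x i j = true → x j = true := by
    intro j hj
    by_cases h : j = i
    · subst h; exact hi
    · rwa [flp_apply, if_neg h] at hj
  exact hx a b hab ⟨mono a ha, mono b hb⟩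

lemma noc_flp_false {x : Fin n → Bool} (hx : NoConsecOnes x) {i : Fin n}
    (hnb : ∀ j : Fin n, ((j : ℕ) + 1 = (i : ℕ) ∨ (i : ℕ) + 1 = (j : ℕ)) → x j = false) :
    NoConsecOnes (flp x i) := by
  intro a b hab hab2
  obtain ⟨ha, hb⟩ := hab2
  by_cases hai : a = i
  · subst hai
    have hbne : b ≠ a := Fin.ne_of_val_ne (by omega)
    rw [flp_apply, if_neg hbne] at hb
    have := hnb b (Or.inr (by omega))
    simp [this] at hb
  · by_cases hbi : b = i
    · subst hbi
      rw [flp_apply, if_neg hai] at ha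
      have := hnb a (Or.inl (by omega))
      simp [this] at ha
    · rw [flp_apply, if_neg hai] at ha
      rw [flp_apply, if_neg hbi] at hb
      exact hx a b hab ⟨ha, hb⟩

lemma noc_flp_nbr {x : Fin n → Bool} {i : Fin n} (h : NoConsecOnes (flp x i))
    (hxi : x i = false) {j : Fin n} (hj : (j : ℕ) + 1 = (i : ℕ) ∨ (i : ℕ) + 1 = (j : ℕ)) :
    x j = false := by
  have hji : j ≠ i := Fin.ne_of_val_ne (by omega)
  by_contra hb
  rw [Bool.not_eq_false] at hb
  have hfi : flp x i i = true := by rw [flp_apply, if_pos rfl, hxi]; rfl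
  have hfj : flp x i j = true := by rw [flp_apply, if_neg hji]; exact hb
  rcases hj with hj | hj
  · exact h j i (by omega) ⟨hfj, hfi⟩
  · exact h i j (by omega) ⟨hfi, hfj⟩

lemma fib_adj {u v : ↥(fibSet n)} : (FibCube n).Adj u v ↔ hammingDist u.1 v.1 = 1 :=
  Iff.rfl

lemma degree_eq [Fintype ↥(fibSet n)] [DecidableRel (FibCube n).Adj] (u : ↥(fibSet n)) :
    (FibCube n).degree u
      = (Finset.univ.filter fun i : Fin n => NoConsecOnes (flp u.1 i)).card := by
  rw [← SimpleGraph.card_neighborFinset_eq_degree]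
  symm
  refine Finset.card_bij
    (fun i hi => (⟨flp u.1 i, (Finset.mem_filter.mp hi).2⟩ : ↥(fibSet n))) ?_ ?_ ?_
  · intro i hi
    rw [SimpleGraph.mem_neighborFinset]
    exact fib_adj.mpr (ham_flp u.1 i)
  · intro a ha b hb hab
    by_contra hne
    have h1 : flp u.1 a = flp u.1 b := congrArg Subtype.val hab
    have h2 := congrFun h1 a
    rw [flp_apply, flp_apply, if_pos rfl, if_neg (by exact hne)] at h2
    simp at h2
  · intro v hv
    rw [SimpleGraph.mem_neighborFinset] at hv
    obtain ⟨i, hi⟩ := eq_flp_of_ham (fib_adj.mp hv)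
    have hnc : NoConsecOnes (flp u.1 i) := hi ▸ v.2
    exact ⟨i, Finset.mem_filter.mpr ⟨Finset.mem_univ _, hnc⟩, Subtype.ext hi.symm⟩

lemma lower_bound {x : Fin n → Bool} (hx : NoConsecOnes x) :
    n ≤ 3 * (Finset.univ.filter fun i : Fin n => NoConsecOnes (flp x i)).card := by
  classical
  set S := Finset.univ.filter fun i : Fin n => NoConsecOnes (flp x i) with hS
  have hchoice : ∀ j : Fin n, ∃ k : Fin n, NoConsecOnes (flp x k) ∧
      ((k : ℕ) = (j : ℕ) ∨ (k : ℕ) + 1 = (j : ℕ) ∨ (j : ℕ) + 1 = (k : ℕ)) := by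
    intro j
    by_cases h1 : x j = true
    · exact ⟨j, noc_flp_true hx h1, Or.inl rfl⟩
    by_cases h2 : ∀ k : Fin n, ((k : ℕ) + 1 = (j : ℕ) ∨ (j : ℕ) + 1 = (k : ℕ)) → x k = false
    · exact ⟨j, noc_flp_false hx h2, Or.inl rfl⟩
    · push_neg at h2
      obtain ⟨k, hk1, hk2⟩ := h2
      have hk2' : x k = true := by simpa using hk2
      exact ⟨k, noc_flp_true hx hk2', by omega⟩
  choose f hf1 hf2 using hchoice
  have maps : ∀ j ∈ (Finset.univ : Finset (Fin n)), f j ∈ S := fun j _ => by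
    rw [hS, Finset.mem_filter]; exact ⟨Finset.mem_univ _, hf1 j⟩
  have bound : ∀ b ∈ S, (Finset.univ.filter fun j => f j = b).card ≤ 3 := by
    intro b _
    have h1 : (Finset.univ.filter fun j => f j = b).card
        ≤ ({(b : ℕ) - 1, (b : ℕ), (b : ℕ) + 1} : Finset ℕ).card := by
      apply Finset.card_le_card_of_injOn Fin.val
      · intro j hj
        rw [Finset.mem_coe, Finset.mem_filter] at hj
        have hd := hf2 j
        rw [hj.2] at hd
        simp only [Finset.mem_coe, Finset.mem_insert, Finset.mem_singleton]
        omega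
      · exact Fin.val_injective.injOn
    refine h1.trans ?_
    refine (Finset.card_insert_le _ _).trans (Nat.succ_le_succ ?_)
    refine (Finset.card_insert_le _ _).trans (Nat.succ_le_succ ?_)
    simp
  have := Finset.card_le_mul_card_image_of_maps_to maps 3 bound
  simpa using this

lemma witness_noc : NoConsecOnes (fun i : Fin n => decide ((i : ℕ) % 3 = 1)) := by
  intro a b hab hab2
  obtain ⟨ha, hb⟩ := hab2
  simp only [decide_eq_true_eq] at ha hb
  omega

lemma count_range (m : ℕ) : ((Finset.range m).filter fun i => i % 3 = 1).card = (m + 1) / 3 := by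
  induction m with
  | zero => simp
  | succ m ih =>
    rw [Finset.range_add_one, Finset.filter_insert]
    by_cases h : m % 3 = 1
    · rw [if_pos h, Finset.card_insert_of_notMem (by simp)]
      omega
    · rw [if_neg h]
      omega

lemma witness_deg_le :
    (Finset.univ.filter fun i : Fin n =>
        NoConsecOnes (flp (fun j : Fin n => decide ((j : ℕ) % 3 = 1)) i)).card ≤ (n + 2) / 3 := by
  classical
  set w : Fin n → Bool := fun j : Fin n => decide ((j : ℕ) % 3 = 1) with hw
  have hwval : ∀ j : Fin n, w j = true ↔ (j : ℕ) % 3 = 1 := by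
    intro j; simp [hw]
  have hsub : (Finset.univ.filter fun i : Fin n => NoConsecOnes (flp w i)) ⊆
      (Finset.univ.filter fun i : Fin n => (i : ℕ) % 3 = 1)
        ∪ (Finset.univ.filter fun i : Fin n => (i : ℕ) = n - 1 ∧ n % 3 = 1) := by
    intro i hi
    rw [Finset.mem_filter] at hi
    have hnc := hi.2
    have h3 : (i : ℕ) % 3 = 0 ∨ (i : ℕ) % 3 = 1 ∨ (i : ℕ) % 3 = 2 := by omega
    rcases h3 with h3 | h3 | h3
    · -- i % 3 = 0 : then i must be the last position and n % 3 = 1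
      have hwi : w i = false := by
        simp only [hw, decide_eq_false_iff_not]; omega
      have hend : (i : ℕ) + 1 ≥ n := by
        by_contra hlt
        push_neg at hlt
        set k : Fin n := ⟨(i : ℕ) + 1, hlt⟩ with hk
        have hwk : w k = true := (hwval k).mpr (by simp [hk]; omega)
        have := noc_flp_nbr hnc hwi (j := k) (Or.inr (by simp [hk]))
        rw [this] at hwk
        exact Bool.false_ne_true hwk
      have hin : (i : ℕ) < n := i.isLt
      refine Finset.mem_union_right _ (Finset.mem_filter.mpr ⟨Finset.mem_univ _, ?_, ?_⟩)
      · omega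
      · omega
    · exact Finset.mem_union_left _ (Finset.mem_filter.mpr ⟨Finset.mem_univ _, h3⟩)
    · -- i % 3 = 2 : impossible, left neighbor is a one
      exfalso
      have hwi : w i = false := by
        simp only [hw, decide_eq_false_iff_not]; omega
      have h2le : 2 ≤ (i : ℕ) := by omega
      set k : Fin n := ⟨(i : ℕ) - 1, by omega⟩ with hk
      have hwk : w k = true := (hwval k).mpr (by simp [hk]; omega)
      have := noc_flp_nbr hnc hwi (j := k) (Or.inl (by simp [hk]; omega))
      rw [this] at hwk
      exact Bool.false_ne_true hwk
  have hcard := Finset.card_le_card hsub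
  have hcu := Finset.card_union_le
    (Finset.univ.filter fun i : Fin n => (i : ℕ) % 3 = 1)
    (Finset.univ.filter fun i : Fin n => (i : ℕ) = n - 1 ∧ n % 3 = 1)
  have c1 : (Finset.univ.filter fun i : Fin n => (i : ℕ) % 3 = 1).card
      = ((Finset.range n).filter fun i => i % 3 = 1).card := by
    refine Finset.card_bij (fun i _ => (i : ℕ)) ?_ ?_ ?_
    · intro a ha
      rw [Finset.mem_filter] at ha
      exact Finset.mem_filter.mpr ⟨Finset.mem_range.mpr a.isLt, ha.2⟩
    · intro a _ b _ h
      exact Fin.val_injective h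
    · intro b hb
      rw [Finset.mem_filter, Finset.mem_range] at hb
      exact ⟨⟨b, hb.1⟩, Finset.mem_filter.mpr ⟨Finset.mem_univ _, hb.2⟩, rfl⟩
  rw [count_range] at c1
  have c2 : (Finset.univ.filter fun i : Fin n => (i : ℕ) = n - 1 ∧ n % 3 = 1).card
      ≤ if n % 3 = 1 then 1 else 0 := by
    by_cases h : n % 3 = 1
    · rw [if_pos h]
      refine Finset.card_le_one.mpr ?_
      intro a ha b hb
      rw [Finset.mem_filter] at ha hb
      exact Fin.val_injective (by omega)
    · rw [if_neg h]
      have : (Finset.univ.filter fun i : Fin n => (i : ℕ) = n - 1 ∧ n % 3 = 1) = ∅ := by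
        refine Finset.filter_eq_empty_iff.mpr ?_
        intro a _
        tauto
      rw [this, Finset.card_empty]
  by_cases h : n % 3 = 1
  · rw [if_pos h] at c2
    omega
  · rw [if_neg h] at c2
    omega

end Aux

/-- The minimum degree of the Fibonacci cube `Γ_n` is `⌊(n+2)/3⌋` for `n ≥ 1`. -/
theorem stmt12 (n : ℕ) (hn : 1 ≤ n) [Fintype ↥(fibSet n)]
    [DecidableRel (FibCube n).Adj] :
    (FibCube n).minDegree = (n + 2) / 3 := by
  have hne : Nonempty ↥(fibSet n) :=
    ⟨⟨fun _ => false, fun i j _ h => by simp at h⟩⟩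
  apply le_antisymm
  · have hw : NoConsecOnes (fun j : Fin n => decide ((j : ℕ) % 3 = 1)) := witness_noc
    calc (FibCube n).minDegree
        ≤ (FibCube n).degree ⟨_, hw⟩ := SimpleGraph.minDegree_le_degree _ _
      _ = (Finset.univ.filter fun i : Fin n =>
            NoConsecOnes (flp (fun j : Fin n => decide ((j : ℕ) % 3 = 1)) i)).card :=
          degree_eq _
      _ ≤ (n + 2) / 3 := witness_deg_le
  · refine SimpleGraph.le_minDegree_of_forall_le_degree _ _ (fun v => ?_)
    rw [degree_eq v]
    have := lower_bound (x := v.1) v.2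
    omega
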